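/- Let n > 2 be an integer and H, C ∈ ℝ with C > r₁(H), where r₁(H) = n·(H·√D + H²·n + 2n − 2) / (2^((n−2)/n) · (n−1)^(2(n−1)/n) · (√D − H·(n−2))^(2/n)) and D = H²·n² + 4n − 4. Then there exists a nonconstant, periodic, twice continuously differentiable function g : ℝ → ℝ with g(t) > 0 and g′(t)² = C − g(t)²·(1 + (H + g(t)^(−n))²) for all t ∈ ℝ (i.e. there exists T > 0 with g(t+T) = g(t) for all t). -/

import Mathlib

set_option maxHeartbeats 1000000

open Real Set

section helpers
variable {x : ℝ}

lemma e0 (x : ℝ) : x^(2:ℤ) = x^2 := by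
  rw [show (2:ℤ) = ((2:ℕ):ℤ) from rfl, zpow_natCast]

lemma e00 (x : ℝ) : x^(1:ℤ) = x := zpow_one x

lemma e1 (hx : x ≠ 0) (n : ℕ) : x^((2:ℤ)-n) = x^2/x^n := by
  rw [zpow_sub₀ hx, zpow_natCast, e0]

lemma e2 (hx : x ≠ 0) (n : ℕ) : x^((2:ℤ)-2*n) = x^2/(x^n)^2 := by
  rw [zpow_sub₀ hx, mul_comm (2:ℤ), zpow_mul, zpow_natCast, e0, e0]

lemma e3 (hx : x ≠ 0) (n : ℕ) : x^((1:ℤ)-n) = x/x^n := by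
  rw [zpow_sub₀ hx, zpow_natCast, e00]

lemma e4 (hx : x ≠ 0) (n : ℕ) : x^((1:ℤ)-2*n) = x/(x^n)^2 := by
  rw [zpow_sub₀ hx, mul_comm (2:ℤ), zpow_mul, zpow_natCast, e00, e0]

lemma e5 (hx : x ≠ 0) (n : ℕ) : x^(-(n:ℤ)) = (x^n)⁻¹ := by
  rw [zpow_neg, zpow_natCast]

end helpers

-- Laurent form
lemma laurent (n : ℕ) (H : ℝ) (x : ℝ) (hx : 0 < x) :
    x^2 * (1 + (H + x^(-(n:ℤ)))^2)
      = (1+H^2)*x^(2:ℤ) + 2*H*x^((2:ℤ)-n) + x^((2:ℤ)-2*n) := by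
  have hxne : x ≠ 0 := hx.ne'
  have hxn : x^n ≠ 0 := pow_ne_zero _ hxne
  rw [e5 hxne, e1 hxne, e2 hxne, e0]
  field_simp
  ring

-- derivative of ψ
lemma psi_deriv (n : ℕ) (H : ℝ) (x : ℝ) (hx : 0 < x) :
    HasDerivAt (fun x : ℝ => (1+H^2)*x^(2:ℤ) + 2*H*x^((2:ℤ)-n) + x^((2:ℤ)-2*n))
      (2*x^((1:ℤ)-2*n) * ((1+H^2)*(x^n)^2 - ((n:ℝ)-2)*H*(x^n) - ((n:ℝ)-1))) x := by
  have hxne : x ≠ 0 := hx.ne'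
  have hxn : x^n ≠ 0 := pow_ne_zero _ hxne
  have h1 := (hasDerivAt_zpow 2 x (Or.inl hxne)).const_mul (1+H^2)
  have h2 := (hasDerivAt_zpow ((2:ℤ)-n) x (Or.inl hxne)).const_mul (2*H)
  have h3 := hasDerivAt_zpow ((2:ℤ)-2*n) x (Or.inl hxne)
  have h := (h1.add h2).add h3
  refine h.congr_deriv ?_
  have k1 : ((2:ℤ) - n - 1) = ((1:ℤ) - n) := by ring
  have k2 : ((2:ℤ) - 2*n - 1) = ((1:ℤ) - 2*n) := by ring
  rw [k1, k2, e3 hxne, e4 hxne]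
  have hx2 : x^(2-1:ℤ) = x := by norm_num
  rw [hx2]
  field_simp
  push_cast
  ring

-- Stage B: roots of C - φ
lemma stageB (n : ℕ) (hn : 2 < n) (H C D r₁ : ℝ)
    (hD : D = H ^ 2 * (n : ℝ) ^ 2 + 4 * (n : ℝ) - 4)
    (hr₁ : r₁ = (n : ℝ) * (H * Real.sqrt D + H ^ 2 * (n : ℝ) + 2 * (n : ℝ) - 2) /
      ((2 : ℝ) ^ (((n : ℝ) - 2) / (n : ℝ))
        * ((n : ℝ) - 1) ^ (2 * ((n : ℝ) - 1) / (n : ℝ))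
        * (Real.sqrt D - H * ((n : ℝ) - 2)) ^ (2 / (n : ℝ))))
    (hC : C > r₁) :
    ∃ α β : ℝ, 0 < α ∧ α < β ∧
      α^2 * (1 + (H + α^(-(n:ℤ)))^2) = C ∧
      β^2 * (1 + (H + β^(-(n:ℤ)))^2) = C ∧
      (∀ x : ℝ, α < x → x < β → x^2 * (1 + (H + x^(-(n:ℤ)))^2) < C) ∧
      (1+H^2)*(α^n)^2 - ((n:ℝ)-2)*H*α^n - ((n:ℝ)-1) < 0 ∧
      0 < (1+H^2)*(β^n)^2 - ((n:ℝ)-2)*H*β^n - ((n:ℝ)-1) := by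
  have hn3 : (3:ℝ) ≤ (n:ℝ) := by exact_mod_cast hn
  have hnne : (n:ℝ) ≠ 0 := by positivity
  set φ : ℝ → ℝ := fun x => x^2 * (1 + (H + x^(-(n:ℤ)))^2) with hφ
  set sD : ℝ := Real.sqrt D with hsD
  have hDpos : 0 < D := by rw [hD]; nlinarith [sq_nonneg H]
  have hsD2 : sD^2 = D := Real.sq_sqrt hDpos.le
  have hsDpos : 0 < sD := Real.sqrt_pos.2 hDpos
  have habs : ((n:ℝ)-2)*|H| < sD := by
    have h1 : ((n:ℝ)-2)^2 * H^2 < D := by rw [hD]; nlinarith [sq_nonneg H]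
    nlinarith [sq_abs H, abs_nonneg H, hsD2, hsDpos, mul_nonneg (by linarith : (0:ℝ) ≤ (n:ℝ)-2) (abs_nonneg H)]
  have habs1 : ((n:ℝ)-2)*H < sD := lt_of_le_of_lt (by
      nlinarith [le_abs_self H]) habs
  have habs2 : -sD < ((n:ℝ)-2)*H := by nlinarith [neg_abs_le H]
  set u : ℝ := (sD - ((n:ℝ)-2)*H)/(2*((n:ℝ)-1)) with hu
  have hupos : 0 < u := by
    apply div_pos (by linarith) (by linarith)
  set v : ℝ := u⁻¹ with hv
  have hvpos : 0 < v := inv_pos.2 hupos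
  have hn1ne : ((n:ℝ)-1) ≠ 0 := by linarith
  have hueq : u * (2*((n:ℝ)-1)) = sD - ((n:ℝ)-2)*H := by
    rw [hu]; field_simp
  have hqu : ((n:ℝ)-1)*u^2 + ((n:ℝ)-2)*H*u - (1+H^2) = 0 := by
    have h4 : (4*((n:ℝ)-1)^2) ≠ 0 := by positivity
    have hqu' : (((n:ℝ)-1)*u^2 + ((n:ℝ)-2)*H*u - (1+H^2)) * (4*((n:ℝ)-1)^2) = 0 := by
      linear_combination (((n:ℝ)-1)*(u*(2*((n:ℝ)-1)) + (sD - ((n:ℝ)-2)*H)) + 2*((n:ℝ)-1)*((n:ℝ)-2)*H) * hueq + ((n:ℝ)-1)*hsD2 + ((n:ℝ)-1)*hD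
    rcases mul_eq_zero.1 hqu' with h | h
    · exact h
    · exact absurd h h4
  have huv : u * v = 1 := mul_inv_cancel₀ hupos.ne'
  have hqv : (1+H^2)*v^2 - ((n:ℝ)-2)*H*v - ((n:ℝ)-1) = 0 := by
    have hu2 : u^2 ≠ 0 := pow_ne_zero _ hupos.ne'
    have hqv' : ((1+H^2)*v^2 - ((n:ℝ)-2)*H*v - ((n:ℝ)-1)) * u^2 = 0 := by
      linear_combination ((1+H^2)*(u*v+1) - ((n:ℝ)-2)*H*u)*huv - hqu
    rcases mul_eq_zero.1 hqv' with h | h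
    · exact h
    · exact absurd h hu2
  -- key positivity for sign analysis
  have hkey : ((n:ℝ)-2)*H < (1+H^2)*v := by
    have hveq : v = 2*((n:ℝ)-1)/(sD - ((n:ℝ)-2)*H) := by
      rw [hv, hu, inv_div]
    rw [hveq, show (1+H^2) * (2*((n:ℝ)-1)/(sD - ((n:ℝ)-2)*H))
        = ((1+H^2) * (2*((n:ℝ)-1)))/(sD - ((n:ℝ)-2)*H) from by ring,
      lt_div_iff₀ (by linarith : (0:ℝ) < sD - ((n:ℝ)-2)*H)]
    nlinarith [hsD2, hD, sq_nonneg H, mul_pos (sub_pos.2 habs1) (sub_pos.2 habs1)]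
  have hqsign_lt : ∀ w : ℝ, 0 < w → w < v → (1+H^2)*w^2 - ((n:ℝ)-2)*H*w - ((n:ℝ)-1) < 0 := by
    intro w hw hwv
    have hfac : (1+H^2)*w^2 - ((n:ℝ)-2)*H*w - ((n:ℝ)-1)
        = (w - v)*((1+H^2)*(w+v) - ((n:ℝ)-2)*H) := by linear_combination hqv
    rw [hfac]
    apply mul_neg_of_neg_of_pos (by linarith)
    nlinarith [hkey, sq_nonneg H]
  have hqsign_gt : ∀ w : ℝ, v < w → 0 < (1+H^2)*w^2 - ((n:ℝ)-2)*H*w - ((n:ℝ)-1) := by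
    intro w hwv
    have hfac : (1+H^2)*w^2 - ((n:ℝ)-2)*H*w - ((n:ℝ)-1)
        = (w - v)*((1+H^2)*(w+v) - ((n:ℝ)-2)*H) := by linear_combination hqv
    rw [hfac]
    apply mul_pos (by linarith)
    nlinarith [hkey, sq_nonneg H, hvpos]
  -- critical point xs
  set xs : ℝ := v ^ ((n:ℝ))⁻¹ with hxs
  have hxspos : 0 < xs := Real.rpow_pos_of_pos hvpos _
  have hxsn : xs^n = v := by
    rw [hxs, ← Real.rpow_natCast (v ^ ((n:ℝ))⁻¹) n, ← Real.rpow_mul hvpos.le,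
      inv_mul_cancel₀ hnne, Real.rpow_one]
  -- derivative of φ
  have hφderiv : ∀ x : ℝ, 0 < x → HasDerivAt φ
      (2*x^((1:ℤ)-2*n) * ((1+H^2)*(x^n)^2 - ((n:ℝ)-2)*H*(x^n) - ((n:ℝ)-1))) x := by
    intro x hx
    have hev : φ =ᶠ[nhds x]
        (fun x : ℝ => (1+H^2)*x^(2:ℤ) + 2*H*x^((2:ℤ)-n) + x^((2:ℤ)-2*n)) := by
      filter_upwards [IsOpen.mem_nhds isOpen_Ioi hx] with y hy
      exact laurent n H y hy
    exact (psi_deriv n H x hx).congr_of_eventuallyEq hev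
  have hφcontAt : ∀ x : ℝ, 0 < x → ContinuousAt φ x := fun x hx =>
    (hφderiv x hx).continuousAt
  -- monotonicity
  have hanti : StrictAntiOn φ (Set.Ioc 0 xs) := by
    apply strictAntiOn_of_deriv_neg (convex_Ioc 0 xs)
    · exact fun x hx => (hφcontAt x hx.1).continuousWithinAt
    · intro x hx
      rw [interior_Ioc] at hx
      rw [(hφderiv x hx.1).deriv]
      have hxv : x^n < v := by
        rw [← hxsn]
        exact pow_lt_pow_left₀ hx.2 hx.1.le (by omega)
      have hq := hqsign_lt (x^n) (pow_pos hx.1 n) hxv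
      have h2 : (0:ℝ) < 2*x^((1:ℤ)-2*n) := by
        have := zpow_pos hx.1 ((1:ℤ)-2*n)
        linarith
      exact mul_neg_of_pos_of_neg h2 hq
  have hmono : StrictMonoOn φ (Set.Ici xs) := by
    apply strictMonoOn_of_deriv_pos (convex_Ici xs)
    · exact fun x hx => (hφcontAt x (lt_of_lt_of_le hxspos hx)).continuousWithinAt
    · intro x hx
      rw [interior_Ici] at hx
      have hx0 : 0 < x := lt_trans hxspos hx
      rw [(hφderiv x hx0).deriv]
      have hxv : v < x^n := by
        rw [← hxsn]
        exact pow_lt_pow_left₀ hx hxspos.le (by omega)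
      have hq := hqsign_gt (x^n) hxv
      have h2 : (0:ℝ) < 2*x^((1:ℤ)-2*n) := by
        have := zpow_pos hx0 ((1:ℤ)-2*n)
        linarith
      exact mul_pos h2 hq
  -- value at xs
  have hdenpos : 0 < sD - H*((n:ℝ)-2) := by nlinarith [habs1]
  have hA : (1 + (H+u)^2)*(2*((n:ℝ)-1)^2)
      = (n:ℝ)*(H*sD + H^2*(n:ℝ) + 2*(n:ℝ) - 2) := by
    linear_combination (u*((n:ℝ)-1) + ((n:ℝ)-1)*H + (sD + ((n:ℝ))*H)/2) * hueq + hsD2/2 + hD/2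
  have hxsval : φ xs = r₁ := by
    have hxsinv : xs^(-(n:ℤ)) = u := by
      rw [e5 hxspos.ne', hxsn, hv, inv_inv]
    have hxs2 : xs^2 = v ^ (2/(n:ℝ)) := by
      rw [hxs, ← Real.rpow_natCast (v ^ ((n:ℝ))⁻¹) 2, ← Real.rpow_mul hvpos.le]
      norm_num
      rw [mul_comm, div_eq_mul_inv]
    have hφxs : φ xs = v ^ (2/(n:ℝ)) * (1 + (H+u)^2) := by
      show xs^2 * (1 + (H + xs^(-(n:ℤ)))^2) = _
      rw [hxsinv, hxs2]
    have hveq2 : v = (2*((n:ℝ)-1))/(sD - H*((n:ℝ)-2)) := by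
      rw [hv, hu, inv_div]
      ring_nf
    have hvr : v ^ (2/(n:ℝ)) = (2:ℝ)^(2/(n:ℝ)) * ((n:ℝ)-1)^(2/(n:ℝ))
        / (sD - H*((n:ℝ)-2))^(2/(n:ℝ)) := by
      rw [hveq2, Real.div_rpow (by linarith) hdenpos.le, Real.mul_rpow (by norm_num) (by linarith)]
    have h2s : (2:ℝ)^(((n:ℝ)-2)/(n:ℝ)) * (2:ℝ)^(2/(n:ℝ)) = 2 := by
      rw [← Real.rpow_add (by norm_num)]
      have : ((n:ℝ)-2)/(n:ℝ) + 2/(n:ℝ) = 1 := by field_simp; ring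
      rw [this, Real.rpow_one]
    have hns : ((n:ℝ)-1)^(2*((n:ℝ)-1)/(n:ℝ)) * ((n:ℝ)-1)^(2/(n:ℝ)) = ((n:ℝ)-1)^2 := by
      rw [← Real.rpow_add (by linarith)]
      have : 2*((n:ℝ)-1)/(n:ℝ) + 2/(n:ℝ) = 2 := by field_simp; ring
      rw [this]
      rw [show ((2:ℝ):ℝ) = ((2:ℕ):ℝ) by norm_num, Real.rpow_natCast]
    -- abbreviations
    set a := (2:ℝ)^(2/(n:ℝ)) with ha
    set b := ((n:ℝ)-1)^(2/(n:ℝ)) with hb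
    set c := (sD - H*((n:ℝ)-2))^(2/(n:ℝ)) with hc
    set p := (2:ℝ)^(((n:ℝ)-2)/(n:ℝ)) with hpp
    set q := ((n:ℝ)-1)^(2*((n:ℝ)-1)/(n:ℝ)) with hq
    have hapos : 0 < a := Real.rpow_pos_of_pos (by norm_num) _
    have hbpos : 0 < b := Real.rpow_pos_of_pos (by linarith) _
    have hcpos : 0 < c := Real.rpow_pos_of_pos hdenpos _
    have hppos : 0 < p := Real.rpow_pos_of_pos (by norm_num) _
    have hqpos : 0 < q := Real.rpow_pos_of_pos (by linarith) _
    rw [hφxs, hvr, hr₁]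
    have hAval : 1 + (H+u)^2 = (n:ℝ)*(H*sD + H^2*(n:ℝ) + 2*(n:ℝ) - 2)/(2*((n:ℝ)-1)^2) := by
      rw [eq_div_iff (by positivity)]
      exact hA
    rw [hAval]
    have hpa : p = 2/a := by rw [eq_div_iff hapos.ne']; exact h2s
    have hqb : q = ((n:ℝ)-1)^2/b := by rw [eq_div_iff hbpos.ne']; exact hns
    rw [hpa, hqb]
    field_simp
  have hφxsC : φ xs < C := by rw [hxsval]; exact hC
  -- small point with large φ
  set K : ℝ := |H| + Real.sqrt (|C|+1) + 1 with hK
  have hKpos : 0 < K := by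
    have := Real.sqrt_nonneg (|C|+1)
    have := abs_nonneg H
    rw [hK]; linarith
  set s₀ : ℝ := min (xs/2) (min 1 K⁻¹) with hs₀
  have hs0pos : 0 < s₀ := by
    apply lt_min (by linarith)
    exact lt_min one_pos (inv_pos.2 hKpos)
  have hs0lt : s₀ < xs := lt_of_le_of_lt (min_le_left _ _) (by linarith)
  have hs0le1 : s₀ ≤ 1 := le_trans (min_le_right _ _) (min_le_left _ _)
  have hs0K : K ≤ s₀⁻¹ := by
    have h1 : s₀ ≤ K⁻¹ := le_trans (min_le_right _ _) (min_le_right _ _)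
    calc K = (K⁻¹)⁻¹ := (inv_inv K).symm
    _ ≤ s₀⁻¹ := by
        apply inv_anti₀ hs0pos h1
  have hφs0 : C < φ s₀ := by
    set t : ℝ := (s₀^n)⁻¹ with ht
    have htpos : 0 < t := inv_pos.2 (pow_pos hs0pos n)
    have hsn_le : s₀^n ≤ s₀^2 := pow_le_pow_of_le_one hs0pos.le hs0le1 (by omega)
    have hst : s₀⁻¹ ≤ s₀ * t := by
      have h1 : (s₀^2)⁻¹ ≤ t := inv_anti₀ (pow_pos hs0pos n) hsn_le
      have h2 : s₀ * (s₀^2)⁻¹ = s₀⁻¹ := by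
        rw [sq]
        field_simp
      rw [← h2]
      exact mul_le_mul_of_nonneg_left h1 hs0pos.le
    have hφs0eq : φ s₀ = s₀^2 + (s₀*H + s₀*t)^2 := by
      show s₀^2 * (1 + (H + s₀^(-(n:ℤ)))^2) = _
      rw [e5 hs0pos.ne', ← ht]
      ring
    set S : ℝ := Real.sqrt (|C|+1) with hS
    have hS2 : S^2 = |C|+1 := Real.sq_sqrt (by positivity)
    have hSpos : 0 ≤ S := Real.sqrt_nonneg _
    have hlow : S + 1 ≤ s₀*H + s₀*t := by
      have h1 : s₀*H ≥ -(|H|) := by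
        have ha : s₀*(-|H|) ≤ s₀*H := mul_le_mul_of_nonneg_left (neg_abs_le H) hs0pos.le
        have hb : s₀*|H| ≤ |H| := mul_le_of_le_one_left (abs_nonneg H) hs0le1
        have hc : s₀*(-|H|) = -(s₀*|H|) := by ring
        linarith only [ha, hb, hc]
      have h2 : s₀ * t ≥ K := le_trans hs0K hst
      rw [hK] at h2
      linarith only [h1, h2]
    rw [hφs0eq]
    have hCle : C ≤ |C| := le_abs_self C
    have h6 : (S+1)^2 ≤ (s₀*H + s₀*t)^2 := by
      apply pow_le_pow_left₀ (by linarith only [hSpos]) hlow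
    have h7 : (S+1)^2 = S^2 + 2*S + 1 := by ring
    nlinarith only [h6, h7, hS2, hCle, sq_nonneg s₀, hSpos]
  -- left root
  have hαex := intermediate_value_Icc' hs0lt.le
    (fun x hx => (hφcontAt x (lt_of_lt_of_le hs0pos hx.1)).continuousWithinAt)
  obtain ⟨α, hαmem, hαval⟩ := hαex ⟨hφxsC.le, hφs0.le⟩
  have hαpos : 0 < α := lt_of_lt_of_le hs0pos hαmem.1
  have hαlt : α < xs := by
    rcases lt_or_eq_of_le hαmem.2 with h | h
    · exact h
    · exfalso; rw [h] at hαval; rw [hαval] at hφxsC; exact lt_irrefl _ hφxsC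
  -- right root
  set x₁ : ℝ := max (xs + 1) (Real.sqrt (|C|+1)) with hx₁
  have hx₁gt : xs < x₁ := lt_of_lt_of_le (by linarith) (le_max_left _ _)
  have hφx₁ : C < φ x₁ := by
    have h1 : Real.sqrt (|C|+1) ≤ x₁ := le_max_right _ _
    have h2 : (Real.sqrt (|C|+1))^2 = |C|+1 := Real.sq_sqrt (by positivity)
    have h3 : |C|+1 ≤ x₁^2 := by
      nlinarith only [h1, h2, Real.sqrt_nonneg (|C|+1)]
    have h4 : x₁^2*(H + x₁^(-(n:ℤ)))^2 ≥ 0 := by positivity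
    have h5 : φ x₁ = x₁^2 + x₁^2*(H + x₁^(-(n:ℤ)))^2 := by
      show x₁^2 * (1 + (H + x₁^(-(n:ℤ)))^2) = _
      ring
    nlinarith only [le_abs_self C, h3, h4, h5]
  have hβex := intermediate_value_Icc hx₁gt.le
    (fun x hx => (hφcontAt x (lt_of_lt_of_le hxspos hx.1)).continuousWithinAt)
  obtain ⟨β, hβmem, hβval⟩ := hβex ⟨hφxsC.le, hφx₁.le⟩
  have hβgt : xs < β := by
    rcases lt_or_eq_of_le hβmem.1 with h | h
    · exact h
    · exfalso; rw [← h] at hβval; rw [hβval] at hφxsC; exact lt_irrefl _ hφxsC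
  -- assemble
  refine ⟨α, β, hαpos, lt_trans hαlt hβgt, hαval, hβval, ?_, ?_, ?_⟩
  · intro x hx1 hx2
    rcases le_or_gt x xs with h | h
    · have := hanti (Set.mem_Ioc.2 ⟨hαpos, hαlt.le⟩) (Set.mem_Ioc.2 ⟨lt_trans hαpos hx1, h⟩) hx1
      rw [hαval] at this
      exact this
    · have := hmono (Set.mem_Ici.2 h.le) (Set.mem_Ici.2 hβgt.le) hx2
      rw [hβval] at this
      exact this
  · apply hqsign_lt _ (pow_pos hαpos n)
    rw [← hxsn]
    exact pow_lt_pow_left₀ hαlt hαpos.le (by omega)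
  · apply hqsign_gt
    rw [← hxsn]
    exact pow_lt_pow_left₀ hβgt hxspos.le (by omega)

open Real Set intervalIntegral

lemma core (n : ℕ) (H C α β : ℝ) (hα : 0 < α) (hαβ : α < β)
    (G : ℝ → ℝ) (hG : ∀ x : ℝ, 0 < x → ContDiffAt ℝ 1 G x)
    (hGpos : ∀ x ∈ Set.Icc α β, 0 < G x)
    (hF : ∀ x ∈ Set.Icc α β,
      C - x ^ 2 * (1 + (H + x ^ (-(n:ℤ))) ^ 2) = (x - α) * (β - x) * G x) :
    ∃ g : ℝ → ℝ, ContDiff ℝ 2 g ∧ (∀ t, 0 < g t) ∧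
      (∀ t : ℝ, (deriv g t) ^ 2 =
        C - (g t) ^ 2 * (1 + (H + g t ^ (-(n : ℤ))) ^ 2)) ∧
      (∃ t₁ t₂ : ℝ, g t₁ ≠ g t₂) ∧
      (∃ T : ℝ, 0 < T ∧ ∀ t : ℝ, g (t + T) = g t) := by
  set m : ℝ := (α + β) / 2 with hm
  set r : ℝ := (β - α) / 2 with hr
  have hrpos : 0 < r := by rw [hr]; linarith
  set p : ℝ → ℝ := fun θ => m + r * Real.sin θ with hp
  have hpmem : ∀ θ, p θ ∈ Set.Icc α β := by
    intro θ
    have h1 := Real.neg_one_le_sin θ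
    have h2 := Real.sin_le_one θ
    constructor
    · show α ≤ m + r * Real.sin θ
      nlinarith
    · show m + r * Real.sin θ ≤ β
      nlinarith
  have hppos : ∀ θ, 0 < p θ := fun θ => lt_of_lt_of_le hα (hpmem θ).1
  set W : ℝ → ℝ := fun θ => Real.sqrt (G (p θ)) with hW
  have hWpos : ∀ θ, 0 < W θ := fun θ => Real.sqrt_pos.2 (hGpos _ (hpmem θ))
  have hpCD : ContDiff ℝ 1 p :=
    contDiff_const.add (contDiff_const.mul (Real.contDiff_sin.of_le le_top))
  have hWCD : ContDiff ℝ 1 W := by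
    rw [contDiff_iff_contDiffAt]
    intro θ
    exact (Real.contDiffAt_sqrt (ne_of_gt (hGpos _ (hpmem θ)))).comp θ
      ((hG _ (hppos θ)).comp θ hpCD.contDiffAt)
  have hWcont : Continuous W := hWCD.continuous
  have hWne : ∀ θ, W θ ≠ 0 := fun θ => ne_of_gt (hWpos θ)
  have hWinvcont : Continuous fun θ => (W θ)⁻¹ := hWcont.inv₀ hWne
  -- upper bound on W via max of G on Icc
  have hGcontOn : ContinuousOn G (Set.Icc α β) := fun x hx =>
    ((hG x (lt_of_lt_of_le hα hx.1)).continuousAt).continuousWithinAt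
  obtain ⟨xM, hxM, hxMmax⟩ := isCompact_Icc.exists_isMaxOn (Set.nonempty_Icc.2 hαβ.le) hGcontOn
  set c : ℝ := (Real.sqrt (G xM))⁻¹ with hc
  have hcpos : 0 < c := by
    rw [hc]
    exact inv_pos.2 (Real.sqrt_pos.2 (hGpos _ hxM))
  have hWle : ∀ θ, c ≤ (W θ)⁻¹ := by
    intro θ
    rw [hc]
    apply inv_anti₀ (hWpos θ)
    exact Real.sqrt_le_sqrt (hxMmax (hpmem θ))
  -- the time-rescaling function τ
  set τ : ℝ → ℝ := fun y => ∫ x in (0:ℝ)..y, (W x)⁻¹ with hτ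
  have hτderiv : ∀ y, HasDerivAt τ ((W y)⁻¹) y := by
    intro y
    exact intervalIntegral.integral_hasDerivAt_right
      (hWinvcont.intervalIntegrable _ _)
      (hWinvcont.stronglyMeasurableAtFilter _ _)
      hWinvcont.continuousAt
  have hτmono : StrictMono τ := by
    apply strictMono_of_deriv_pos
    intro y
    rw [(hτderiv y).deriv]
    exact inv_pos.2 (hWpos y)
  have hτcont : Continuous τ := by
    have : Differentiable ℝ τ := fun y => (hτderiv y).differentiableAt
    exact this.continuous
  -- linear growth bounds
  have hτlin : ∀ y : ℝ, 0 ≤ y → c * y ≤ τ y := by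
    intro y hy
    have : ∫ x in (0:ℝ)..y, c ≤ ∫ x in (0:ℝ)..y, (W x)⁻¹ :=
      intervalIntegral.integral_mono_on hy (intervalIntegrable_const)
        (hWinvcont.intervalIntegrable _ _) (fun x _ => hWle x)
    simpa [mul_comm] using this
  have hτlin' : ∀ y : ℝ, y ≤ 0 → τ y ≤ c * y := by
    intro y hy
    have h0 : ∫ x in y..(0:ℝ), c ≤ ∫ x in y..(0:ℝ), (W x)⁻¹ :=
      intervalIntegral.integral_mono_on (by linarith) (intervalIntegrable_const)
        (hWinvcont.intervalIntegrable _ _) (fun x _ => hWle x)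
    have h1 : ∫ x in y..(0:ℝ), (W x)⁻¹ = - τ y := by
      rw [hτ]
      simp [intervalIntegral.integral_symm y 0]
    rw [h1] at h0
    simp at h0
    nlinarith
  have hτsurj : Function.Surjective τ := by
    apply hτcont.surjective
    · refine Filter.tendsto_atTop_mono' Filter.atTop ?_
        (Filter.Tendsto.const_mul_atTop hcpos Filter.tendsto_id)
      filter_upwards [Filter.eventually_ge_atTop (0:ℝ)] with y hy
      exact hτlin y hy
    · refine Filter.tendsto_atBot_mono' Filter.atBot ?_
        (Filter.Tendsto.const_mul_atBot hcpos Filter.tendsto_id)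
      filter_upwards [Filter.eventually_le_atBot (0:ℝ)] with y hy
      exact hτlin' y hy
  -- the inverse function θ
  set e := StrictMono.orderIsoOfSurjective τ hτmono hτsurj with he
  set θ : ℝ → ℝ := fun t => e.symm t with hθ
  have hτθ : ∀ t, τ (θ t) = t := fun t => e.apply_symm_apply t
  have hθτ : ∀ y, θ (τ y) = y := fun y => e.symm_apply_apply y
  have hθcont : Continuous θ := (OrderIso.continuous e.symm)
  have hθderiv : ∀ t, HasDerivAt θ (W (θ t)) t := by
    intro t
    have h := HasDerivAt.of_local_left_inverse (hθcont.continuousAt)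
      (hτderiv (θ t)) (inv_ne_zero (hWne (θ t)))
      (Filter.Eventually.of_forall hτθ)
    simpa using h
  have hθdiff : Differentiable ℝ θ := fun t => (hθderiv t).differentiableAt
  have hθderiv' : deriv θ = fun t => W (θ t) := funext fun t => (hθderiv t).deriv
  have hθCD1 : ContDiff ℝ 1 θ := by
    rw [show (1 : WithTop ℕ∞) = 0 + 1 from rfl, contDiff_succ_iff_deriv]
    refine ⟨hθdiff, by simp, ?_⟩
    rw [hθderiv', contDiff_zero]
    exact hWcont.comp hθcont
  have hθCD : ContDiff ℝ 2 θ := by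
    rw [show (2 : WithTop ℕ∞) = 1 + 1 from rfl, contDiff_succ_iff_deriv]
    refine ⟨hθdiff, by simp, ?_⟩
    rw [hθderiv']
    exact hWCD.comp hθCD1
  -- the solution g
    -- g = p ∘ θ
  refine ⟨fun t => p (θ t), ?_, fun t => hppos (θ t), ?_, ?_, ?_⟩
  · exact contDiff_const.add (contDiff_const.mul ((Real.contDiff_sin.of_le le_top).comp hθCD))
  · -- the ODE
    intro t
    have hgder : HasDerivAt (fun t => p (θ t)) (r * Real.cos (θ t) * W (θ t)) t := by
      have h1 : HasDerivAt (fun t => Real.sin (θ t)) (Real.cos (θ t) * W (θ t)) t :=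
        (Real.hasDerivAt_sin (θ t)).comp t (hθderiv t)
      have := (h1.const_mul r).const_add m
      refine this.congr_deriv ?_
      ring
    rw [hgder.deriv]
    have hmem := hpmem (θ t)
    have hfact := hF _ hmem
    have hsq : (W (θ t)) ^ 2 = G (p (θ t)) := Real.sq_sqrt (le_of_lt (hGpos _ hmem))
    have hcos : (p (θ t) - α) * (β - p (θ t)) = r ^ 2 * (Real.cos (θ t)) ^ 2 := by
      have hps : Real.sin (θ t) ^ 2 + Real.cos (θ t) ^ 2 = 1 := Real.sin_sq_add_cos_sq (θ t)
      show (m + r * Real.sin (θ t) - α) * (β - (m + r * Real.sin (θ t))) = _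
      rw [hm, hr]
      nlinarith [hps]
    rw [hfact, hcos, ← hsq]
    ring
  · -- nonconstant
    refine ⟨τ (π/2), τ (-(π/2)), ?_⟩
    show p (θ (τ (π/2))) ≠ p (θ (τ (-(π/2))))
    rw [hθτ, hθτ]
    show m + r * Real.sin (π/2) ≠ m + r * Real.sin (-(π/2))
    rw [Real.sin_pi_div_two]
    rw [Real.sin_neg, Real.sin_pi_div_two]
    intro hcontra
    nlinarith
  · -- periodicity
    refine ⟨τ (2*π), ?_, ?_⟩
    · have h0 : τ 0 = 0 := by rw [hτ]; simp
      have := hτmono (show (0:ℝ) < 2*π by positivity)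
      rw [h0] at this
      exact this
    · intro t
      have hper : ∀ y : ℝ, τ (y + 2*π) = τ y + τ (2*π) := by
        intro y
        have hWper : ∀ x : ℝ, (W (x + 2*π))⁻¹ = (W x)⁻¹ := by
          intro x
          have hpx : p (x + 2*π) = p x := by
            show m + r * Real.sin (x + 2*π) = m + r * Real.sin x
            rw [Real.sin_add_two_pi]
          show (Real.sqrt (G (p (x + 2*π))))⁻¹ = (Real.sqrt (G (p x)))⁻¹
          rw [hpx]
        have hint : ∀ a b : ℝ, ∫ x in a..b, (W x)⁻¹ = ∫ x in a+2*π..b+2*π, (W x)⁻¹ := by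
          intro a b
          rw [← intervalIntegral.integral_comp_add_right (fun x => (W x)⁻¹) (2*π)]
          simp only [hWper]
        have h1 : τ (y + 2*π) = τ (2*π) + ∫ x in 2*π..(y+2*π), (W x)⁻¹ := by
          show (∫ x in (0:ℝ)..(y+2*π), (W x)⁻¹) = (∫ x in (0:ℝ)..(2*π), (W x)⁻¹) + _
          rw [intervalIntegral.integral_add_adjacent_intervals
            (hWinvcont.intervalIntegrable 0 (2*π))
            (hWinvcont.intervalIntegrable (2*π) (y + 2*π))]
        have h2 : ∫ x in 2*π..(y+2*π), (W x)⁻¹ = τ y := by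
          show _ = ∫ x in (0:ℝ)..y, (W x)⁻¹
          rw [hint 0 y]
          norm_num
        rw [h1, h2]; ring
      have hθper : θ (t + τ (2*π)) = θ t + 2*π := by
        apply hτmono.injective
        rw [hτθ, hper, hτθ]
      show p (θ (t + τ (2*π))) = p (θ t)
      rw [hθper]
      show m + r * Real.sin (θ t + 2*π) = m + r * Real.sin (θ t)
      rw [Real.sin_add_two_pi]

open Polynomial

/-- Theorem 10.3, existence direction (sphere case, a = b = d = 1): if
`C > r₁(H)`, there exists a nonconstant periodic positive `C²` global solution of
`g′² = C − g²·(1 + (H + g^(−n))²)`. -/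
theorem stmt_12 (n : ℕ) (hn : 2 < n) (H C : ℝ)
    (D : ℝ) (hD : D = H ^ 2 * (n : ℝ) ^ 2 + 4 * (n : ℝ) - 4)
    (r₁ : ℝ)
    (hr₁ : r₁ = (n : ℝ) * (H * Real.sqrt D + H ^ 2 * (n : ℝ) + 2 * (n : ℝ) - 2) /
      ((2 : ℝ) ^ (((n : ℝ) - 2) / (n : ℝ))
        * ((n : ℝ) - 1) ^ (2 * ((n : ℝ) - 1) / (n : ℝ))
        * (Real.sqrt D - H * ((n : ℝ) - 2)) ^ (2 / (n : ℝ))))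
    (hC : C > r₁) :
    ∃ g : ℝ → ℝ, ContDiff ℝ 2 g ∧ (∀ t, 0 < g t) ∧
      (∀ t : ℝ, (deriv g t) ^ 2 =
        C - (g t) ^ 2 * (1 + (H + g t ^ (-(n : ℤ))) ^ 2)) ∧
      (∃ t₁ t₂ : ℝ, g t₁ ≠ g t₂) ∧
      (∃ T : ℝ, 0 < T ∧ ∀ t : ℝ, g (t + T) = g t) := by
  obtain ⟨α, β, hαpos, hαβ, hφα, hφβ, hmid, hqα, hqβ⟩ := stageB n hn H C D r₁ hD hr₁ hC
  have hβpos : 0 < β := lt_trans hαpos hαβ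
  set P : Polynomial ℝ := Polynomial.C C * Polynomial.X^(2*n-2)
    - Polynomial.C (1+H^2) * Polynomial.X^(2*n)
    - Polynomial.C (2*H) * Polynomial.X^n - 1 with hP
  have hPeval : ∀ x : ℝ, x ≠ 0 →
      P.eval x = x^(2*n-2) * (C - x^2*(1+(H+x^(-(n:ℤ)))^2)) := by
    intro x hxne
    obtain ⟨k, hk⟩ : ∃ k, n = k + 3 := ⟨n - 3, by omega⟩
    subst hk
    rw [hP]
    simp only [Polynomial.eval_sub, Polynomial.eval_mul, Polynomial.eval_pow,
      Polynomial.eval_C, Polynomial.eval_X, Polynomial.eval_one]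
    rw [e5 hxne]
    rw [show 2*(k+3)-2 = 2*k+4 from by omega]
    field_simp
    ring
  have hPα : P.IsRoot α := by
    rw [Polynomial.IsRoot, hPeval α hαpos.ne', hφα]
    ring
  have hPβ : P.IsRoot β := by
    rw [Polynomial.IsRoot, hPeval β hβpos.ne', hφβ]
    ring
  have hcop : IsCoprime (X - Polynomial.C α) (X - Polynomial.C β) :=
    Polynomial.isCoprime_X_sub_C_of_isUnit_sub ((sub_ne_zero_of_ne (ne_of_lt hαβ)).isUnit)
  have hdvd : (X - Polynomial.C α) * (X - Polynomial.C β) ∣ P :=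
    hcop.mul_dvd (Polynomial.dvd_iff_isRoot.2 hPα) (Polynomial.dvd_iff_isRoot.2 hPβ)
  obtain ⟨Q, hPQ⟩ := hdvd
  set G : ℝ → ℝ := fun x => - Q.eval x / x^(2*n-2) with hG
  have hGF : ∀ x : ℝ, 0 < x →
      C - x^2*(1+(H+x^(-(n:ℤ)))^2) = (x-α)*(β-x)*G x := by
    intro x hx
    have h := hPeval x hx.ne'
    rw [hPQ] at h
    simp only [Polynomial.eval_mul, Polynomial.eval_sub, Polynomial.eval_X,
      Polynomial.eval_C] at h
    have hxpow : (x:ℝ)^(2*n-2) ≠ 0 := pow_ne_zero _ hx.ne'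
    show _ = (x-α)*(β-x)*(- Q.eval x / x^(2*n-2))
    rw [show (x-α)*(β-x)*(- Q.eval x / x^(2*n-2))
        = ((x - α) * (x - β) * Q.eval x) / x^(2*n-2) from by ring]
    rw [h, mul_div_cancel_left₀ _ hxpow]
  have hGC1 : ∀ x : ℝ, 0 < x → ContDiffAt ℝ 1 G x := by
    intro x hx
    have h1 : ContDiff ℝ 1 (fun y : ℝ => Q.eval y) := by
      rw [show (1 : WithTop ℕ∞) = 0 + 1 from rfl, contDiff_succ_iff_deriv]
      refine ⟨Q.differentiable, by simp, ?_⟩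
      rw [contDiff_zero]
      have : deriv (fun y : ℝ => Q.eval y) = fun y => (Polynomial.derivative Q).eval y := by
        funext y; exact Q.deriv
      rw [this]
      exact (Polynomial.derivative Q).continuous
    exact (h1.neg.contDiffAt).div ((contDiff_id.pow (2*n-2)).contDiffAt)
      (pow_ne_zero _ hx.ne')
  -- derivative of φ, as in stageB
  have hφderiv : ∀ x : ℝ, 0 < x → HasDerivAt (fun x : ℝ => x^2 * (1 + (H + x^(-(n:ℤ)))^2))
      (2*x^((1:ℤ)-2*n) * ((1+H^2)*(x^n)^2 - ((n:ℝ)-2)*H*(x^n) - ((n:ℝ)-1))) x := by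
    intro x hx
    have hev : (fun x : ℝ => x^2 * (1 + (H + x^(-(n:ℤ)))^2)) =ᶠ[nhds x]
        (fun x : ℝ => (1+H^2)*x^(2:ℤ) + 2*H*x^((2:ℤ)-n) + x^((2:ℤ)-2*n)) := by
      filter_upwards [IsOpen.mem_nhds isOpen_Ioi hx] with y hy
      exact laurent n H y hy
    exact (psi_deriv n H x hx).congr_of_eventuallyEq hev
  -- derivative of P at the roots
  have hPder : ∀ x : ℝ, 0 < x → x^2*(1+(H+x^(-(n:ℤ)))^2) = C →
      (Polynomial.derivative P).eval x
        = - (x^(2*n-2) * (2*x^((1:ℤ)-2*n)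
            * ((1+H^2)*(x^n)^2 - ((n:ℝ)-2)*H*(x^n) - ((n:ℝ)-1)))) := by
    intro x hx hval
    have hd1 : HasDerivAt (fun y : ℝ => P.eval y) ((Polynomial.derivative P).eval x) x :=
      P.hasDerivAt x
    have hφd := hφderiv x hx
    have hd2 : HasDerivAt (fun y : ℝ => y^(2*n-2) * (C - y^2*(1+(H+y^(-(n:ℤ)))^2)))
        ((↑(2*n-2) * x^(2*n-2-1)) * (C - x^2*(1+(H+x^(-(n:ℤ)))^2))
          + x^(2*n-2) * (-(2*x^((1:ℤ)-2*n)
            * ((1+H^2)*(x^n)^2 - ((n:ℝ)-2)*H*(x^n) - ((n:ℝ)-1))))) x := by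
      have := (hasDerivAt_pow (2*n-2) x).mul (hφd.const_sub C)
      refine this.congr_deriv ?_
      try ring
    have hev : (fun y : ℝ => y^(2*n-2) * (C - y^2*(1+(H+y^(-(n:ℤ)))^2))) =ᶠ[nhds x]
        (fun y => P.eval y) := by
      filter_upwards [IsOpen.mem_nhds isOpen_Ioi hx] with y hy
      exact (hPeval y hy.ne').symm
    have hd2' := hd2.congr_of_eventuallyEq hev.symm
    have huniq := hd1.unique hd2'
    rw [huniq, hval]
    try ring
  have hPQd : ∀ x : ℝ, (Polynomial.derivative P).eval x
      = ((x - α) + (x - β)) * Q.eval x + (x-α)*(x-β)*(Polynomial.derivative Q).eval x := by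
    intro x
    rw [hPQ]
    simp only [Polynomial.derivative_mul, Polynomial.derivative_X_sub_C,
      Polynomial.eval_add, Polynomial.eval_mul, Polynomial.eval_sub,
      Polynomial.eval_X, Polynomial.eval_C, Polynomial.eval_one]
    ring
  have hQα : Q.eval α < 0 := by
    have h1 := hPder α hαpos hφα
    have h2 := hPQd α
    rw [h1] at h2
    have hw : 0 < α^(2*n-2) * (2*α^((1:ℤ)-2*n)) := by
      have h3 := zpow_pos hαpos ((1:ℤ)-2*n)
      have h4 := pow_pos hαpos (2*n-2)
      positivity
    have hpos : 0 < - (α^(2*n-2) * (2*α^((1:ℤ)-2*n)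
        * ((1+H^2)*(α^n)^2 - ((n:ℝ)-2)*H*(α^n) - ((n:ℝ)-1)))) := by
      have := mul_pos hw (neg_pos.2 hqα)
      nlinarith only [this]
    nlinarith only [hpos, h2, hαβ]
  have hQβ : Q.eval β < 0 := by
    have h1 := hPder β hβpos hφβ
    have h2 := hPQd β
    rw [h1] at h2
    have hw : 0 < β^(2*n-2) * (2*β^((1:ℤ)-2*n)) := by
      have h3 := zpow_pos hβpos ((1:ℤ)-2*n)
      have h4 := pow_pos hβpos (2*n-2)
      positivity
    have hneg : - (β^(2*n-2) * (2*β^((1:ℤ)-2*n)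
        * ((1+H^2)*(β^n)^2 - ((n:ℝ)-2)*H*(β^n) - ((n:ℝ)-1)))) < 0 := by
      have := mul_pos hw hqβ
      nlinarith only [this]
    nlinarith only [hneg, h2, hαβ]
  have hGpos : ∀ x ∈ Set.Icc α β, 0 < G x := by
    intro x hx
    have hx0 : 0 < x := lt_of_lt_of_le hαpos hx.1
    rcases eq_or_lt_of_le hx.1 with h | h
    · show 0 < - Q.eval x / x^(2*n-2)
      rw [← h]
      exact div_pos (neg_pos.2 hQα) (pow_pos hαpos _)
    rcases eq_or_lt_of_le hx.2 with h2 | h2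
    · show 0 < - Q.eval x / x^(2*n-2)
      rw [h2]
      exact div_pos (neg_pos.2 hQβ) (pow_pos hβpos _)
    · have heq := hGF x hx0
      have hgt := hmid x h h2
      have hprod : 0 < (x-α)*(β-x) := mul_pos (by linarith) (by linarith)
      nlinarith only [heq, hgt, hprod]
  exact core n H C α β hαpos hαβ G hGC1 hGpos
    (fun x hx => hGF x (lt_of_lt_of_le hαpos hx.1))
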